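/- Under the ideal cluster assumption (A_{ij} = 0 whenever y_i ≠ y_j), let m and p be distinct indices with p ≤ l (p labeled), y_m = y_p, and A_{mp} = 0, and let ε > 0. Define A' to be equal to A except that A'_{mp} = A'_{pm} = ε. If moreover m > l (m is unlabeled) and m is not correctly predicted under A, then the accuracy strictly increases: Acc(A') > Acc(A). -/

import Mathlib

open Matrix BigOperators Finset

attribute [local instance] Classical.propDecidable

/-- Row sum `d_i = Σ_j A_{ij}` of the affinity matrix. -/
noncomputable def rowSum {n : ℕ} (A : Matrix (Fin n) (Fin n) ℝ) (i : Fin n) : ℝ :=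
  ∑ j, A i j

/-- The normalized matrix `S = D^{-1/2} A D^{-1/2}`. -/
noncomputable def Smat {n : ℕ} (A : Matrix (Fin n) (Fin n) ℝ) : Matrix (Fin n) (Fin n) ℝ :=
  Matrix.diagonal (fun i => (Real.sqrt (rowSum A i))⁻¹) * A *
    Matrix.diagonal (fun i => (Real.sqrt (rowSum A i))⁻¹)

/-- Label matrix `Y` (indices `i` with `(i : ℕ) < l` are the labeled ones). -/
noncomputable def Ymat {n K : ℕ} (l : ℕ) (y : Fin n → Fin K) : Matrix (Fin n) (Fin K) ℝ :=
  fun i c => if (i : ℕ) < l ∧ y i = c then 1 else 0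

/-- `F* = (I - α S)^{-1} Y`. -/
noncomputable def Fstar {n K : ℕ} (l : ℕ) (y : Fin n → Fin K) (α : ℝ)
    (A : Matrix (Fin n) (Fin n) ℝ) : Matrix (Fin n) (Fin K) ℝ :=
  (1 - α • Smat A)⁻¹ * Ymat l y

/-- Instance `i` is correctly predicted: `F*_{i, y_i} > F*_{i, c}` for all `c ≠ y_i`. -/
def CorrectlyPredicted {n K : ℕ} (l : ℕ) (y : Fin n → Fin K) (α : ℝ)
    (A : Matrix (Fin n) (Fin n) ℝ) (i : Fin n) : Prop :=
  ∀ c : Fin K, c ≠ y i → Fstar l y α A i c < Fstar l y α A i (y i)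

/-- Accuracy on the unlabeled instances (those with `(i : ℕ) ≥ l`). -/
noncomputable def AccLP {n K : ℕ} (l : ℕ) (y : Fin n → Fin K) (α : ℝ)
    (A : Matrix (Fin n) (Fin n) ℝ) : ℝ :=
  ((Finset.univ.filter
      (fun i : Fin n => l ≤ (i : ℕ) ∧ CorrectlyPredicted l y α A i)).card : ℝ) /
    ((n : ℝ) - (l : ℝ))

/-- `i` and `j` are connected w.r.t. `B`: a finite sequence of at least one step
with positive affinities joins them. -/
def Connected {n : ℕ} (B : Matrix (Fin n) (Fin n) ℝ) : Fin n → Fin n → Prop :=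
  Relation.TransGen (fun i j => 0 < B i j)

namespace LPaux

variable {n : ℕ}

/-- `B = α D⁻¹ A`, a nonnegative matrix with row sums `α`. -/
noncomputable def B (α : ℝ) (A : Matrix (Fin n) (Fin n) ℝ) : Matrix (Fin n) (Fin n) ℝ :=
  fun i j => α * (A i j / rowSum A i)

lemma B_nonneg {α : ℝ} {A : Matrix (Fin n) (Fin n) ℝ} (hα : 0 ≤ α)
    (hA : ∀ i j, 0 ≤ A i j) (hrow : ∀ i, 0 < rowSum A i) (i j : Fin n) :
    0 ≤ B α A i j :=
  mul_nonneg hα (div_nonneg (hA i j) (hrow i).le)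

lemma B_rowsum {α : ℝ} {A : Matrix (Fin n) (Fin n) ℝ}
    (hrow : ∀ i, 0 < rowSum A i) (i : Fin n) :
    ∑ j, B α A i j = α := by
  unfold B
  rw [← Finset.mul_sum, ← Finset.sum_div,
    show ∑ j, A i j = rowSum A i from rfl, div_self (hrow i).ne', mul_one]

lemma B_pow_nonneg {α : ℝ} {A : Matrix (Fin n) (Fin n) ℝ} (hα : 0 ≤ α)
    (hA : ∀ i j, 0 ≤ A i j) (hrow : ∀ i, 0 < rowSum A i) :
    ∀ (k : ℕ) (i j : Fin n), 0 ≤ (B α A ^ k) i j := by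
  intro k
  induction k with
  | zero =>
    intro i j
    rw [pow_zero]
    by_cases h : i = j <;> simp [Matrix.one_apply, h]
  | succ k ih =>
    intro i j
    rw [pow_succ, Matrix.mul_apply]
    exact Finset.sum_nonneg fun t _ => mul_nonneg (ih i t) (B_nonneg hα hA hrow t j)

lemma B_pow_rowsum {α : ℝ} {A : Matrix (Fin n) (Fin n) ℝ}
    (hrow : ∀ i, 0 < rowSum A i) :
    ∀ (k : ℕ) (i : Fin n), ∑ j, (B α A ^ k) i j = α ^ k := by
  intro k
  induction k with
  | zero => intro i; simp [Matrix.one_apply]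
  | succ k ih =>
    intro i
    rw [pow_succ']
    simp only [Matrix.mul_apply]
    rw [Finset.sum_comm]
    calc ∑ t, ∑ j, B α A i t * (B α A ^ k) t j
        = ∑ t, B α A i t * α ^ k := by
          refine Finset.sum_congr rfl fun t _ => ?_
          rw [← Finset.mul_sum, ih t]
      _ = α ^ (k + 1) := by
          rw [← Finset.sum_mul, B_rowsum hrow i, pow_succ']

lemma B_pow_le {α : ℝ} {A : Matrix (Fin n) (Fin n) ℝ} (hα : 0 ≤ α)
    (hA : ∀ i j, 0 ≤ A i j) (hrow : ∀ i, 0 < rowSum A i) (k : ℕ) (i j : Fin n) :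
    (B α A ^ k) i j ≤ α ^ k := by
  calc (B α A ^ k) i j ≤ ∑ j', (B α A ^ k) i j' :=
        Finset.single_le_sum (fun j' _ => B_pow_nonneg hα hA hrow k i j') (Finset.mem_univ j)
    _ = α ^ k := B_pow_rowsum hrow k i

lemma det_one_sub_ne_zero {α : ℝ} {A : Matrix (Fin n) (Fin n) ℝ} (hα0 : 0 ≤ α) (hα1 : α < 1)
    (hA : ∀ i j, 0 ≤ A i j) (hdiag : ∀ i, A i i = 0) (hrow : ∀ i, 0 < rowSum A i) :
    (1 - B α A).det ≠ 0 := by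
  apply det_ne_zero_of_sum_row_lt_diag
  intro k
  have hBkk : B α A k k = 0 := by unfold B; rw [hdiag k]; simp
  have hkk : (1 - B α A) k k = 1 := by
    simp [Matrix.sub_apply, Matrix.one_apply_eq, hBkk]
  rw [hkk]
  have hsum : ∑ j ∈ Finset.univ.erase k, ‖(1 - B α A) k j‖
      = ∑ j ∈ Finset.univ.erase k, B α A k j := by
    refine Finset.sum_congr rfl fun j hj => ?_
    have hjk : j ≠ k := Finset.ne_of_mem_erase hj
    have h1 : (1 - B α A) k j = -(B α A k j) := by
      simp [Matrix.sub_apply, Matrix.one_apply_ne (Ne.symm hjk)]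
    rw [h1, norm_neg, Real.norm_eq_abs, abs_of_nonneg (B_nonneg hα0 hA hrow k j)]
  rw [hsum, Finset.sum_erase_eq_sub (Finset.mem_univ k), B_rowsum hrow, hBkk, sub_zero, norm_one]
  exact hα1

lemma geom_decomp {α : ℝ} {A : Matrix (Fin n) (Fin n) ℝ}
    (hdet : (1 - B α A).det ≠ 0) (N : ℕ) :
    (1 - B α A)⁻¹ = (∑ k ∈ Finset.range N, B α A ^ k) + B α A ^ N * (1 - B α A)⁻¹ := by
  have hMQ : (1 - B α A) * (1 - B α A)⁻¹ = 1 :=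
    Matrix.mul_nonsing_inv _ (isUnit_iff_ne_zero.mpr hdet)
  have h2 : (∑ k ∈ Finset.range N, B α A ^ k) * (1 - B α A) = 1 - B α A ^ N := by
    have h := geom_sum_mul (B α A) N
    calc (∑ k ∈ Finset.range N, B α A ^ k) * (1 - B α A)
        = -((∑ k ∈ Finset.range N, B α A ^ k) * (B α A - 1)) := by
          rw [← mul_neg, neg_sub]
      _ = 1 - B α A ^ N := by rw [h, neg_sub]
  have h3 : (∑ k ∈ Finset.range N, B α A ^ k) = (1 - B α A ^ N) * (1 - B α A)⁻¹ := by
    calc (∑ k ∈ Finset.range N, B α A ^ k)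
        = (∑ k ∈ Finset.range N, B α A ^ k) * ((1 - B α A) * (1 - B α A)⁻¹) := by
          rw [hMQ, mul_one]
      _ = ((∑ k ∈ Finset.range N, B α A ^ k) * (1 - B α A)) * (1 - B α A)⁻¹ := by
          rw [Matrix.mul_assoc]
      _ = (1 - B α A ^ N) * (1 - B α A)⁻¹ := by rw [h2]
  rw [h3, Matrix.sub_mul, Matrix.one_mul]
  abel

lemma rem_bound {α : ℝ} {A : Matrix (Fin n) (Fin n) ℝ} (hα : 0 ≤ α)
    (hA : ∀ i j, 0 ≤ A i j) (hrow : ∀ i, 0 < rowSum A i) (N : ℕ) (i j : Fin n) :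
    |(B α A ^ N * (1 - B α A)⁻¹) i j| ≤ α ^ N * ∑ t, ∑ s, |(1 - B α A)⁻¹ t s| := by
  set Q := (1 - B α A)⁻¹ with hQ
  rw [Matrix.mul_apply]
  calc |∑ t, (B α A ^ N) i t * Q t j| ≤ ∑ t, |(B α A ^ N) i t * Q t j| :=
        Finset.abs_sum_le_sum_abs _ _
    _ = ∑ t, (B α A ^ N) i t * |Q t j| := by
        refine Finset.sum_congr rfl fun t _ => ?_
        rw [abs_mul, abs_of_nonneg (B_pow_nonneg hα hA hrow N i t)]
    _ ≤ ∑ t, α ^ N * |Q t j| :=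
        Finset.sum_le_sum fun t _ =>
          mul_le_mul_of_nonneg_right (B_pow_le hα hA hrow N i t) (abs_nonneg _)
    _ = α ^ N * ∑ t, |Q t j| := by rw [Finset.mul_sum]
    _ ≤ α ^ N * ∑ t, ∑ s, |Q t s| := by
        refine mul_le_mul_of_nonneg_left ?_ (pow_nonneg hα N)
        exact Finset.sum_le_sum fun t _ =>
          Finset.single_le_sum (f := fun s => |Q t s|) (fun s _ => abs_nonneg _)
            (Finset.mem_univ j)

lemma tendsto_rem {α : ℝ} (hα0 : 0 ≤ α) (hα1 : α < 1) (c : ℝ) :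
    Filter.Tendsto (fun N : ℕ => α ^ N * c) Filter.atTop (nhds 0) := by
  have h := (tendsto_pow_atTop_nhds_zero_of_lt_one hα0 hα1).mul_const c
  simpa using h

lemma Q_nonneg {α : ℝ} {A : Matrix (Fin n) (Fin n) ℝ} (hα0 : 0 ≤ α) (hα1 : α < 1)
    (hA : ∀ i j, 0 ≤ A i j) (hrow : ∀ i, 0 < rowSum A i)
    (hdet : (1 - B α A).det ≠ 0) (i j : Fin n) :
    0 ≤ (1 - B α A)⁻¹ i j := by
  set c := ∑ t, ∑ s, |(1 - B α A)⁻¹ t s| with hc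
  have key : ∀ N : ℕ, -(α ^ N * c) ≤ (1 - B α A)⁻¹ i j := by
    intro N
    have hd := geom_decomp hdet N
    have he : (1 - B α A)⁻¹ i j
        = (∑ k ∈ Finset.range N, B α A ^ k) i j + (B α A ^ N * (1 - B α A)⁻¹) i j := by
      conv_lhs => rw [hd]
      rw [Matrix.add_apply]
    have h1 : 0 ≤ (∑ k ∈ Finset.range N, B α A ^ k) i j := by
      rw [Matrix.sum_apply]
      exact Finset.sum_nonneg fun k _ => B_pow_nonneg hα0 hA hrow k i j
    have h2 := (abs_le.mp (rem_bound hα0 hA hrow N i j)).1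
    rw [he]; linarith
  have hlim : Filter.Tendsto (fun N : ℕ => -(α ^ N * c)) Filter.atTop (nhds 0) := by
    simpa using (tendsto_rem hα0 hα1 c).neg
  exact le_of_tendsto' hlim key

lemma Q_ge_pow {α : ℝ} {A : Matrix (Fin n) (Fin n) ℝ} (hα0 : 0 ≤ α) (hα1 : α < 1)
    (hA : ∀ i j, 0 ≤ A i j) (hrow : ∀ i, 0 < rowSum A i)
    (hdet : (1 - B α A).det ≠ 0) (k : ℕ) (i j : Fin n) :
    (B α A ^ k) i j ≤ (1 - B α A)⁻¹ i j := by
  have hd := geom_decomp hdet (k + 1)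
  have he : (1 - B α A)⁻¹ i j
      = (∑ k' ∈ Finset.range (k + 1), B α A ^ k') i j
        + (B α A ^ (k + 1) * (1 - B α A)⁻¹) i j := by
    conv_lhs => rw [hd]
    rw [Matrix.add_apply]
  have h1 : (B α A ^ k) i j ≤ (∑ k' ∈ Finset.range (k + 1), B α A ^ k') i j := by
    rw [Matrix.sum_apply]
    exact Finset.single_le_sum (fun k' _ => B_pow_nonneg hα0 hA hrow k' i j)
      (Finset.self_mem_range_succ k)
  have h2 : 0 ≤ (B α A ^ (k + 1) * (1 - B α A)⁻¹) i j := by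
    rw [Matrix.mul_apply]
    exact Finset.sum_nonneg fun t _ =>
      mul_nonneg (B_pow_nonneg hα0 hA hrow (k + 1) i t) (Q_nonneg hα0 hα1 hA hrow hdet t j)
  rw [he]; linarith

lemma B_pow_zero {κ : Type*} {y : Fin n → κ} {α : ℝ} {A : Matrix (Fin n) (Fin n) ℝ}
    (hBz : ∀ i j, y i ≠ y j → B α A i j = 0) :
    ∀ (k : ℕ) (i j : Fin n), y i ≠ y j → (B α A ^ k) i j = 0 := by
  intro k
  induction k with
  | zero =>
    intro i j hij
    rw [pow_zero, Matrix.one_apply_ne (fun h => hij (by rw [h]))]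
  | succ k ih =>
    intro i j hij
    rw [pow_succ', Matrix.mul_apply]
    refine Finset.sum_eq_zero fun t _ => ?_
    by_cases h : y i = y t
    · rw [ih t j (h ▸ hij), mul_zero]
    · rw [hBz i t h, zero_mul]

lemma Q_zero_of_ne {κ : Type*} {y : Fin n → κ} {α : ℝ} {A : Matrix (Fin n) (Fin n) ℝ}
    (hα0 : 0 ≤ α) (hα1 : α < 1)
    (hA : ∀ i j, 0 ≤ A i j) (hrow : ∀ i, 0 < rowSum A i)
    (hdet : (1 - B α A).det ≠ 0)
    (hBz : ∀ i j, y i ≠ y j → B α A i j = 0) {i j : Fin n} (hij : y i ≠ y j) :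
    (1 - B α A)⁻¹ i j = 0 := by
  set c := ∑ t, ∑ s, |(1 - B α A)⁻¹ t s| with hc
  have key : ∀ N : ℕ, |(1 - B α A)⁻¹ i j| ≤ α ^ N * c := by
    intro N
    have hd := geom_decomp hdet N
    have he : (1 - B α A)⁻¹ i j
        = (∑ k ∈ Finset.range N, B α A ^ k) i j + (B α A ^ N * (1 - B α A)⁻¹) i j := by
      conv_lhs => rw [hd]
      rw [Matrix.add_apply]
    have h1 : (∑ k ∈ Finset.range N, B α A ^ k) i j = 0 := by
      rw [Matrix.sum_apply]
      exact Finset.sum_eq_zero fun k _ => B_pow_zero hBz k i j hij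
    rw [he, h1, zero_add]
    exact rem_bound hα0 hA hrow N i j
  have habs : |(1 - B α A)⁻¹ i j| ≤ 0 :=
    ge_of_tendsto' (tendsto_rem hα0 hα1 c) key
  exact abs_nonpos_iff.mp habs

lemma Q_pos_exists {α : ℝ} {A : Matrix (Fin n) (Fin n) ℝ} (hα0 : 0 ≤ α) (hα1 : α < 1)
    (hA : ∀ i j, 0 ≤ A i j) (hrow : ∀ i, 0 < rowSum A i)
    (hdet : (1 - B α A).det ≠ 0) {i j : Fin n} (h : 0 < (1 - B α A)⁻¹ i j) :
    ∃ k : ℕ, 0 < (B α A ^ k) i j := by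
  set c := ∑ t, ∑ s, |(1 - B α A)⁻¹ t s| with hc
  have hev : ∀ᶠ N in Filter.atTop, α ^ N * c < (1 - B α A)⁻¹ i j :=
    (tendsto_rem hα0 hα1 c).eventually (gt_mem_nhds h)
  obtain ⟨N, hN⟩ := hev.exists
  have hd := geom_decomp hdet N
  have he : (1 - B α A)⁻¹ i j
      = (∑ k ∈ Finset.range N, B α A ^ k) i j + (B α A ^ N * (1 - B α A)⁻¹) i j := by
    conv_lhs => rw [hd]
    rw [Matrix.add_apply]
  have hpos : 0 < (∑ k ∈ Finset.range N, B α A ^ k) i j := by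
    have h2 := (abs_le.mp (rem_bound hα0 hA hrow N i j)).2
    rw [he] at hN
    linarith
  rw [Matrix.sum_apply] at hpos
  by_contra hcon
  push_neg at hcon
  exact absurd (Finset.sum_nonpos fun k _ => hcon k) (not_le.mpr hpos)

lemma pow_pos_mono {α : ℝ} {A A' : Matrix (Fin n) (Fin n) ℝ} (hα0 : 0 ≤ α)
    (hA : ∀ i j, 0 ≤ A i j) (hrow : ∀ i, 0 < rowSum A i)
    (hA' : ∀ i j, 0 ≤ A' i j) (hrow' : ∀ i, 0 < rowSum A' i)
    (hstep : ∀ i j, 0 < B α A i j → 0 < B α A' i j) :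
    ∀ (k : ℕ) (i j : Fin n), 0 < (B α A ^ k) i j → 0 < (B α A' ^ k) i j := by
  intro k
  induction k with
  | zero => intro i j h; rw [pow_zero] at h ⊢; exact h
  | succ k ih =>
    intro i j h
    rw [pow_succ', Matrix.mul_apply] at h
    obtain ⟨t, ht⟩ : ∃ t, 0 < B α A i t * (B α A ^ k) t j := by
      by_contra hc; push_neg at hc
      exact absurd (Finset.sum_nonpos fun t _ => hc t) (not_le.mpr h)
    have h1 : 0 < B α A i t := by
      rcases mul_pos_iff.mp ht with ⟨ha, _⟩ | ⟨_, hb⟩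
      · exact ha
      · exact absurd hb (not_lt.mpr (B_pow_nonneg hα0 hA hrow k t j))
    have h2 : 0 < (B α A ^ k) t j := by
      rcases mul_pos_iff.mp ht with ⟨_, hb⟩ | ⟨ha, _⟩
      · exact hb
      · exact absurd ha (not_lt.mpr (B_nonneg hα0 hA hrow i t))
    rw [pow_succ', Matrix.mul_apply]
    calc (0 : ℝ) < B α A' i t * (B α A' ^ k) t j := mul_pos (hstep i t h1) (ih t j h2)
      _ ≤ ∑ s, B α A' i s * (B α A' ^ k) s j :=
        Finset.single_le_sum (fun s _ =>
          mul_nonneg (B_nonneg hα0 hA' hrow' i s) (B_pow_nonneg hα0 hA' hrow' k s j))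
          (Finset.mem_univ t)


lemma Fstar_formula {K : ℕ} (l : ℕ) (y : Fin n → Fin K) (α : ℝ)
    (A : Matrix (Fin n) (Fin n) ℝ)
    (hrow : ∀ i, 0 < rowSum A i) (hdiag : ∀ i, A i i = 0)
    (hdet : (1 - B α A).det ≠ 0) (i : Fin n) (c : Fin K) :
    Fstar l y α A i c = Real.sqrt (rowSum A i) *
      ∑ j, (1 - B α A)⁻¹ i j * ((Real.sqrt (rowSum A j))⁻¹ * Ymat l y j c) := by
  have hsq : ∀ i : Fin n, Real.sqrt (rowSum A i) ≠ 0 :=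
    fun i => (Real.sqrt_pos.mpr (hrow i)).ne'
  set E : Matrix (Fin n) (Fin n) ℝ :=
    Matrix.diagonal (fun i => Real.sqrt (rowSum A i)) with hE
  set E' : Matrix (Fin n) (Fin n) ℝ :=
    Matrix.diagonal (fun i => (Real.sqrt (rowSum A i))⁻¹) with hE'
  have hEE' : E * E' = 1 := by
    rw [hE, hE', Matrix.diagonal_mul_diagonal,
      show (fun i => Real.sqrt (rowSum A i) * (Real.sqrt (rowSum A i))⁻¹)
        = fun _ => (1 : ℝ) from funext fun i => mul_inv_cancel₀ (hsq i),
      Matrix.diagonal_one]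
  have hE'E : E' * E = 1 := by
    rw [hE, hE', Matrix.diagonal_mul_diagonal,
      show (fun i => (Real.sqrt (rowSum A i))⁻¹ * Real.sqrt (rowSum A i))
        = fun _ => (1 : ℝ) from funext fun i => inv_mul_cancel₀ (hsq i),
      Matrix.diagonal_one]
  have hfact : 1 - α • Smat A = E * (1 - B α A) * E' := by
    ext i j
    have hSij : Smat A i j
        = (Real.sqrt (rowSum A i))⁻¹ * A i j * (Real.sqrt (rowSum A j))⁻¹ := by
      unfold Smat
      rw [Matrix.mul_diagonal, Matrix.diagonal_mul]
    have hRHS : (E * (1 - B α A) * E') i j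
        = Real.sqrt (rowSum A i) * ((1 - B α A) i j) * (Real.sqrt (rowSum A j))⁻¹ := by
      rw [hE, hE', Matrix.mul_diagonal, Matrix.diagonal_mul]
    rw [hRHS, Matrix.sub_apply, Matrix.smul_apply, smul_eq_mul, hSij, Matrix.sub_apply]
    show (1 : Matrix (Fin n) (Fin n) ℝ) i j - _
      = Real.sqrt (rowSum A i) * ((1 : Matrix (Fin n) (Fin n) ℝ) i j
          - α * (A i j / rowSum A i)) * (Real.sqrt (rowSum A j))⁻¹
    by_cases hij : i = j
    · subst hij
      rw [Matrix.one_apply_eq, hdiag i]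
      simp only [mul_zero, zero_mul, zero_div, sub_zero, mul_one]
      exact (mul_inv_cancel₀ (hsq i)).symm
    · rw [Matrix.one_apply_ne hij]
      have hs : Real.sqrt (rowSum A i) * Real.sqrt (rowSum A i) = rowSum A i :=
        Real.mul_self_sqrt (hrow i).le
      rw [← hs]
      field_simp
      rw [Real.sqrt_sq (Real.sqrt_nonneg _)]
      have h1 := hsq i
      have h2 := hsq j
      field_simp
      ring
  have hMQ : (1 - B α A) * (1 - B α A)⁻¹ = 1 :=
    Matrix.mul_nonsing_inv _ (isUnit_iff_ne_zero.mpr hdet)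
  have hinv : (1 - α • Smat A)⁻¹ = E * (1 - B α A)⁻¹ * E' := by
    apply Matrix.inv_eq_right_inv
    rw [hfact]
    have hassoc : E * (1 - B α A) * E' * (E * (1 - B α A)⁻¹ * E')
        = E * ((1 - B α A) * ((E' * E) * ((1 - B α A)⁻¹ * E'))) := by
      simp only [Matrix.mul_assoc]
    rw [hassoc, hE'E, Matrix.one_mul,
      show (1 - B α A) * ((1 - B α A)⁻¹ * E') = ((1 - B α A) * (1 - B α A)⁻¹) * E' from
        (Matrix.mul_assoc _ _ _).symm,
      hMQ, Matrix.one_mul, hEE']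
  show ((1 - α • Smat A)⁻¹ * Ymat l y) i c = _
  rw [hinv, Matrix.mul_apply, Finset.mul_sum]
  refine Finset.sum_congr rfl fun j _ => ?_
  have : (E * (1 - B α A)⁻¹ * E') i j
      = Real.sqrt (rowSum A i) * ((1 - B α A)⁻¹ i j) * (Real.sqrt (rowSum A j))⁻¹ := by
    rw [hE, hE', Matrix.mul_diagonal, Matrix.diagonal_mul]
  rw [this]
  ring


lemma Ymat_nonneg {K : ℕ} (l : ℕ) (y : Fin n → Fin K) (j : Fin n) (c : Fin K) :
    0 ≤ Ymat l y j c := by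
  unfold Ymat; split <;> norm_num

lemma Fstar_eq_zero {K : ℕ} (l : ℕ) (y : Fin n → Fin K) {α : ℝ}
    {A : Matrix (Fin n) (Fin n) ℝ} (hα0 : 0 ≤ α) (hα1 : α < 1)
    (hA : ∀ i j, 0 ≤ A i j) (hdiag : ∀ i, A i i = 0) (hrow : ∀ i, 0 < rowSum A i)
    (hBz : ∀ i j, y i ≠ y j → B α A i j = 0)
    (i : Fin n) (c : Fin K) (hc : c ≠ y i) : Fstar l y α A i c = 0 := by
  have hdet := det_one_sub_ne_zero hα0 hα1 hA hdiag hrow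
  rw [Fstar_formula l y α A hrow hdiag hdet]
  rw [show (∑ j, (1 - B α A)⁻¹ i j *
      ((Real.sqrt (rowSum A j))⁻¹ * Ymat l y j c)) = 0 from ?_, mul_zero]
  refine Finset.sum_eq_zero fun j _ => ?_
  by_cases hY : (j : ℕ) < l ∧ y j = c
  · have hyij : y i ≠ y j := fun h => hc (by rw [← hY.2, ← h])
    rw [Q_zero_of_ne hα0 hα1 hA hrow hdet hBz hyij, zero_mul]
  · have h0 : Ymat l y j c = 0 := by simp only [Ymat, if_neg hY]
    rw [h0, mul_zero, mul_zero]

lemma Fstar_pos_of_wit {K : ℕ} (l : ℕ) (y : Fin n → Fin K) {α : ℝ}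
    {A : Matrix (Fin n) (Fin n) ℝ} (hα0 : 0 ≤ α) (hα1 : α < 1)
    (hA : ∀ i j, 0 ≤ A i j) (hdiag : ∀ i, A i i = 0) (hrow : ∀ i, 0 < rowSum A i)
    (i j : Fin n) (hjl : (j : ℕ) < l) (hjy : y j = y i)
    (hQ : 0 < (1 - B α A)⁻¹ i j) : 0 < Fstar l y α A i (y i) := by
  have hdet := det_one_sub_ne_zero hα0 hα1 hA hdiag hrow
  rw [Fstar_formula l y α A hrow hdiag hdet]
  refine mul_pos (Real.sqrt_pos.mpr (hrow i)) ?_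
  refine Finset.sum_pos' (fun j' _ => ?_) ⟨j, Finset.mem_univ j, ?_⟩
  · exact mul_nonneg (Q_nonneg hα0 hα1 hA hrow hdet i j')
      (mul_nonneg (inv_nonneg.mpr (Real.sqrt_nonneg _)) (Ymat_nonneg l y j' _))
  · have hY : Ymat l y j (y i) = 1 := by
      unfold Ymat
      rw [if_pos (⟨hjl, hjy⟩ : (j : ℕ) < l ∧ y j = y i)]
    rw [hY, mul_one]
    exact mul_pos hQ (inv_pos.mpr (Real.sqrt_pos.mpr (hrow j)))

lemma wit_of_Fstar_pos {K : ℕ} (l : ℕ) (y : Fin n → Fin K) {α : ℝ}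
    {A : Matrix (Fin n) (Fin n) ℝ} (hα0 : 0 ≤ α) (hα1 : α < 1)
    (hA : ∀ i j, 0 ≤ A i j) (hdiag : ∀ i, A i i = 0) (hrow : ∀ i, 0 < rowSum A i)
    (i : Fin n) (h : 0 < Fstar l y α A i (y i)) :
    ∃ j : Fin n, (j : ℕ) < l ∧ y j = y i ∧ 0 < (1 - B α A)⁻¹ i j := by
  have hdet := det_one_sub_ne_zero hα0 hα1 hA hdiag hrow
  rw [Fstar_formula l y α A hrow hdiag hdet] at h
  have hsum : 0 < ∑ j, (1 - B α A)⁻¹ i j *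
      ((Real.sqrt (rowSum A j))⁻¹ * Ymat l y j (y i)) := by
    rcases mul_pos_iff.mp h with ⟨_, hs⟩ | ⟨hneg, _⟩
    · exact hs
    · exact absurd hneg (not_lt.mpr (Real.sqrt_nonneg _))
  obtain ⟨j, hterm⟩ : ∃ j, 0 < (1 - B α A)⁻¹ i j *
      ((Real.sqrt (rowSum A j))⁻¹ * Ymat l y j (y i)) := by
    by_contra hc; push_neg at hc
    exact absurd (Finset.sum_nonpos fun j _ => hc j) (not_le.mpr hsum)
  have hY : (j : ℕ) < l ∧ y j = y i := by
    by_contra hc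
    have h0 : Ymat l y j (y i) = 0 := by simp only [Ymat, if_neg hc]
    rw [h0, mul_zero, mul_zero] at hterm
    exact lt_irrefl 0 hterm
  have hQ : 0 < (1 - B α A)⁻¹ i j := by
    rcases mul_pos_iff.mp hterm with ⟨hq, _⟩ | ⟨_, hneg⟩
    · exact hq
    · exact absurd hneg (not_lt.mpr (mul_nonneg
        (inv_nonneg.mpr (Real.sqrt_nonneg _)) (Ymat_nonneg l y j _)))
  exact ⟨j, hY.1, hY.2, hQ⟩


end LPaux

/-- under the ideal cluster assumption, if `m` is unlabeled, not correctly
predicted under `A`, and we enhance the zero-valued affinity between `m` and a labeled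
instance `p` of the same true label to `ε > 0`, then the accuracy strictly increases:
`Acc(A') > Acc(A)`. -/
theorem lp_augment_acc_increasing
    {n K : ℕ} (l : ℕ) (hl : 0 < l) (hln : l < n) (hK : 0 < K)
    (y : Fin n → Fin K) (α : ℝ) (hα0 : 0 < α) (hα1 : α < 1)
    (A A' : Matrix (Fin n) (Fin n) ℝ)
    (hsym : A.IsSymm) (hnonneg : ∀ i j, 0 ≤ A i j) (hdiag : ∀ i, A i i = 0)
    (hrow : ∀ i, 0 < rowSum A i)
    (hcluster : ∀ i j, y i ≠ y j → A i j = 0)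
    (m p : Fin n) (hmp : m ≠ p) (hp : (p : ℕ) < l) (hy : y m = y p)
    (hAmp : A m p = 0) (ε : ℝ) (hε : 0 < ε)
    (hA' : ∀ i j, A' i j = if (i = m ∧ j = p) ∨ (i = p ∧ j = m) then ε else A i j)
    (hm : l ≤ (m : ℕ)) (hnotcorrect : ¬ CorrectlyPredicted l y α A m) :
    AccLP l y α A < AccLP l y α A' := by
  classical
  have hα0' : (0:ℝ) ≤ α := hα0.le
  have hApm : A p m = 0 := by
    have h := congrFun (congrFun hsym m) p
    simp only [Matrix.transpose_apply] at h
    rw [h]; exact hAmp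
  have hnonneg' : ∀ i j, 0 ≤ A' i j := by
    intro i j; rw [hA' i j]; split
    · exact hε.le
    · exact hnonneg i j
  have hdiag' : ∀ i, A' i i = 0 := by
    intro i; rw [hA' i i, if_neg, hdiag i]
    rintro (⟨h1, h2⟩ | ⟨h1, h2⟩)
    · exact hmp (h1.symm.trans h2)
    · exact hmp (h2.symm.trans h1)
  have hle : ∀ i j, A i j ≤ A' i j := by
    intro i j; rw [hA' i j]
    split
    · next h =>
        rcases h with ⟨h1, h2⟩ | ⟨h1, h2⟩
        · subst h1; subst h2; rw [hAmp]; exact hε.le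
        · subst h1; subst h2; rw [hApm]; exact hε.le
    · exact le_refl _
  have hrowle : ∀ i, rowSum A i ≤ rowSum A' i :=
    fun i => Finset.sum_le_sum fun j _ => hle i j
  have hrow' : ∀ i, 0 < rowSum A' i := fun i => lt_of_lt_of_le (hrow i) (hrowle i)
  have hcluster' : ∀ i j, y i ≠ y j → A' i j = 0 := by
    intro i j hij; rw [hA' i j]
    split
    · next h =>
        rcases h with ⟨h1, h2⟩ | ⟨h1, h2⟩
        · subst h1; subst h2; exact absurd hy hij
        · subst h1; subst h2; exact absurd hy.symm hij
    · exact hcluster i j hij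
  have hdet : (1 - LPaux.B α A).det ≠ 0 :=
    LPaux.det_one_sub_ne_zero hα0' hα1 hnonneg hdiag hrow
  have hdet' : (1 - LPaux.B α A').det ≠ 0 :=
    LPaux.det_one_sub_ne_zero hα0' hα1 hnonneg' hdiag' hrow'
  have hBz : ∀ i j, y i ≠ y j → LPaux.B α A i j = 0 := by
    intro i j hij; unfold LPaux.B; rw [hcluster i j hij]; simp
  have hBz' : ∀ i j, y i ≠ y j → LPaux.B α A' i j = 0 := by
    intro i j hij; unfold LPaux.B; rw [hcluster' i j hij]; simp
  have hstep : ∀ i j, 0 < LPaux.B α A i j → 0 < LPaux.B α A' i j := by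
    intro i j h
    have hApos : 0 < A i j := by
      by_contra hc
      have h0 : A i j = 0 := le_antisymm (not_lt.mp hc) (hnonneg i j)
      unfold LPaux.B at h
      rw [h0] at h
      simp at h
    have hA'pos : 0 < A' i j := lt_of_lt_of_le hApos (hle i j)
    exact mul_pos hα0 (div_pos hA'pos (hrow' i))
  -- correctness transfer
  obtain ⟨c0, hc0, -⟩ : ∃ c, c ≠ y m ∧
      ¬ Fstar l y α A m c < Fstar l y α A m (y m) := by
    unfold CorrectlyPredicted at hnotcorrect
    push_neg at hnotcorrect
    obtain ⟨c, hc1, hc2⟩ := hnotcorrect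
    exact ⟨c, hc1, not_lt.mpr hc2⟩
  have hexc : ∀ i : Fin n, ∃ c, c ≠ y i := by
    intro i
    by_cases h : y i = y m
    · exact ⟨c0, by rw [h]; exact hc0⟩
    · exact ⟨y m, fun e => h e.symm⟩
  have htrans : ∀ i, CorrectlyPredicted l y α A i → CorrectlyPredicted l y α A' i := by
    intro i hi
    obtain ⟨c, hc⟩ := hexc i
    have hpos : 0 < Fstar l y α A i (y i) := by
      have h1 := hi c hc
      rwa [LPaux.Fstar_eq_zero l y hα0' hα1 hnonneg hdiag hrow hBz i c hc] at h1
    obtain ⟨j, hjl, hjy, hQ⟩ :=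
      LPaux.wit_of_Fstar_pos l y hα0' hα1 hnonneg hdiag hrow i hpos
    obtain ⟨k, hk⟩ := LPaux.Q_pos_exists hα0' hα1 hnonneg hrow hdet hQ
    have hk' := LPaux.pow_pos_mono hα0' hnonneg hrow hnonneg' hrow' hstep k i j hk
    have hQ' : 0 < (1 - LPaux.B α A')⁻¹ i j :=
      lt_of_lt_of_le hk' (LPaux.Q_ge_pow hα0' hα1 hnonneg' hrow' hdet' k i j)
    have hpos' := LPaux.Fstar_pos_of_wit l y hα0' hα1 hnonneg' hdiag' hrow' i j hjl hjy hQ'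
    intro c' hc'
    rw [LPaux.Fstar_eq_zero l y hα0' hα1 hnonneg' hdiag' hrow' hBz' i c' hc']
    exact hpos'
  have hmcorrect' : CorrectlyPredicted l y α A' m := by
    have hBmp : 0 < LPaux.B α A' m p := by
      have hA'mp : A' m p = ε := by rw [hA' m p, if_pos (Or.inl ⟨rfl, rfl⟩)]
      unfold LPaux.B
      rw [hA'mp]
      exact mul_pos hα0 (div_pos hε (hrow' m))
    have hQ'mp : 0 < (1 - LPaux.B α A')⁻¹ m p := by
      calc (0:ℝ) < (LPaux.B α A' ^ 1) m p := by rwa [pow_one]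
        _ ≤ (1 - LPaux.B α A')⁻¹ m p :=
          LPaux.Q_ge_pow hα0' hα1 hnonneg' hrow' hdet' 1 m p
    have hpos' := LPaux.Fstar_pos_of_wit l y hα0' hα1 hnonneg' hdiag' hrow' m p hp hy.symm hQ'mp
    intro c hc
    rw [LPaux.Fstar_eq_zero l y hα0' hα1 hnonneg' hdiag' hrow' hBz' m c hc]
    exact hpos'
  -- counting
  have hsub : (Finset.univ.filter
        (fun i : Fin n => l ≤ (i : ℕ) ∧ CorrectlyPredicted l y α A i))
      ⊆ (Finset.univ.filter
        (fun i : Fin n => l ≤ (i : ℕ) ∧ CorrectlyPredicted l y α A' i)) := by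
    intro i hi
    rw [Finset.mem_filter] at hi ⊢
    exact ⟨hi.1, hi.2.1, htrans i hi.2.2⟩
  have hmT' : m ∈ Finset.univ.filter
      (fun i : Fin n => l ≤ (i : ℕ) ∧ CorrectlyPredicted l y α A' i) := by
    rw [Finset.mem_filter]
    exact ⟨Finset.mem_univ m, hm, hmcorrect'⟩
  have hmT : m ∉ Finset.univ.filter
      (fun i : Fin n => l ≤ (i : ℕ) ∧ CorrectlyPredicted l y α A i) := by
    rw [Finset.mem_filter]
    rintro ⟨-, -, hcor⟩
    exact hnotcorrect hcor
  have hcard : (Finset.univ.filter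
        (fun i : Fin n => l ≤ (i : ℕ) ∧ CorrectlyPredicted l y α A i)).card
      < (Finset.univ.filter
        (fun i : Fin n => l ≤ (i : ℕ) ∧ CorrectlyPredicted l y α A' i)).card :=
    Finset.card_lt_card ((Finset.ssubset_iff_of_subset hsub).mpr ⟨m, hmT', hmT⟩)
  have hden : (0:ℝ) < (n : ℝ) - (l : ℝ) := by
    have : (l : ℝ) < (n : ℝ) := by exact_mod_cast hln
    linarith
  unfold AccLP
  rw [div_lt_div_iff_of_pos_right hden]
  exact_mod_cast hcard
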